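/- Let G be a finite group with a normal subgroup K and a subgroup H such that K ∩ H = 1, G = KH, and every nontrivial element of H commutes with no nontrivial element of K (so G is a Frobenius group with kernel K and complement H). Let N be a normal subgroup of G with K properly contained in N and N properly contained in G, and set M = H ∩ N. Then (H, M) is an equal order pair if and only if (G, N) is an equal order pair. -/
import Mathlib


/-- `(G, N)` is an *equal order pair* if `N` is a proper, nontrivial, normal subgroup of `G`
and for every `x ∈ G \ N` and every `n ∈ N`, the order of `x * n` equals the order of `x`. -/
def IsEqualOrderPair {G : Type*} [Group G] (N : Subgroup G) : Prop :=
  N.Normal ∧ N ≠ ⊥ ∧ N ≠ ⊤ ∧ ∀ x ∉ N, ∀ n ∈ N, orderOf (x * n) = orderOf x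

/-- In a Frobenius group, any element `k * h` with `k` in the kernel and `h ≠ 1` in the
complement is conjugate to `h` by an element of the kernel, so it has the same order. -/
lemma frob_orderOf_mul {G : Type*} [Group G] [Finite G] (K H : Subgroup G) [hKn : K.Normal]
    (hFrob : ∀ h ∈ H, h ≠ 1 → ∀ k ∈ K, k ≠ 1 → h * k ≠ k * h)
    {h k : G} (hh : h ∈ H) (hne : h ≠ 1) (hk : k ∈ K) :
    orderOf (k * h) = orderOf h := by
  -- the map a ↦ a⁻¹ * (h * a * h⁻¹) from K to K is injective, hence surjective
  have hmem : ∀ a : K, (a : G)⁻¹ * (h * a * h⁻¹) ∈ K :=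
    fun a => K.mul_mem (K.inv_mem a.2) (hKn.conj_mem _ a.2 h)
  let f : K → K := fun a => ⟨(a : G)⁻¹ * (h * a * h⁻¹), hmem a⟩
  have hinj : Function.Injective f := by
    intro a b hab
    have hab' : (a : G)⁻¹ * (h * a * h⁻¹) = (b : G)⁻¹ * (h * b * h⁻¹) :=
      congrArg Subtype.val hab
    have hcomm : h * ((b : G) * (a : G)⁻¹) = ((b : G) * (a : G)⁻¹) * h := by
      calc h * ((b : G) * (↑a)⁻¹)
          = ↑b * ((↑b : G)⁻¹ * (h * ↑b * h⁻¹)) * (h * (↑a : G)⁻¹) := by group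
        _ = ↑b * ((↑a : G)⁻¹ * (h * ↑a * h⁻¹)) * (h * (↑a : G)⁻¹) := by rw [hab']
        _ = (↑b * (↑a : G)⁻¹) * h := by group
    by_contra hne2
    have hab1 : (b : G) * (a : G)⁻¹ ≠ 1 := by
      intro h1
      exact hne2 (Subtype.ext (mul_inv_eq_one.mp h1)).symm
    exact hFrob h hh hne _ (K.mul_mem b.2 (K.inv_mem a.2)) hab1 hcomm
  have hsurj : Function.Surjective f := Finite.surjective_of_injective hinj
  obtain ⟨a, ha⟩ := hsurj ⟨k, hk⟩
  have ha' : (a : G)⁻¹ * (h * a * h⁻¹) = k := congrArg Subtype.val ha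
  have hconj : k * h = (a : G)⁻¹ * h * (a : G) := by
    rw [← ha']; group
  rw [hconj]
  have : SemiconjBy ((a : G)⁻¹) h ((a : G)⁻¹ * h * (a : G)) := by
    show (↑a : G)⁻¹ * h = ((↑a : G)⁻¹ * h * ↑a) * (↑a : G)⁻¹
    group
  exact (this.orderOf_eq _).symm

theorem stmt7 {G : Type*} [Group G] [Finite G] (K H N : Subgroup G)
    [K.Normal] [N.Normal]
    (hKH : K ⊓ H = ⊥) (hG : K ⊔ H = ⊤)
    (hFrob : ∀ h ∈ H, h ≠ 1 → ∀ k ∈ K, k ≠ 1 → h * k ≠ k * h)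
    (hKN : K < N) (hNG : N < ⊤) :
    IsEqualOrderPair (N.subgroupOf H) ↔ IsEqualOrderPair N := by
  have hKle : K ≤ N := hKN.le
  -- decomposition G = K * H
  have decomp : ∀ g : G, ∃ k ∈ K, ∃ h ∈ H, g = k * h := by
    intro g
    have hg : g ∈ (K ⊔ H : Subgroup G) := hG ▸ Subgroup.mem_top g
    rw [← SetLike.mem_coe, Subgroup.normal_mul] at hg
    obtain ⟨k, hk, h, hh, hkh⟩ := hg
    exact ⟨k, hk, h, hh, hkh.symm⟩
  constructor
  · rintro ⟨-, -, -, hord⟩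
    refine ⟨inferInstance, ?_, hNG.ne, ?_⟩
    · intro hbot
      rw [hbot] at hKN
      exact not_lt_bot hKN
    · intro x hx n hn
      obtain ⟨k, hk, h, hh, rfl⟩ := decomp x
      obtain ⟨k', hk', m, hm, rfl⟩ := decomp n
      have hmN : m ∈ N := by
        have : (k')⁻¹ * (k' * m) ∈ N := N.mul_mem (N.inv_mem (hKle hk')) hn
        simpa using this
      have hhN : h ∉ N := fun h' => hx (N.mul_mem (hKle hk) h')
      have hh1 : h ≠ 1 := fun e => hhN (e ▸ N.one_mem)
      have hhmH : h * m ∈ H := H.mul_mem hh hm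
      have hhmN : h * m ∉ N := fun h' => hhN (by simpa using N.mul_mem h' (N.inv_mem hmN))
      have hhm1 : h * m ≠ 1 := fun e => hhmN (e ▸ N.one_mem)
      -- rewrite x * n as k'' * (h * m) with k'' ∈ K
      have hk'' : k * (h * k' * h⁻¹) ∈ K := K.mul_mem hk (‹K.Normal›.conj_mem _ hk' h)
      have heq : k * h * (k' * m) = (k * (h * k' * h⁻¹)) * (h * m) := by group
      rw [heq, frob_orderOf_mul K H hFrob hhmH hhm1 hk'',
        frob_orderOf_mul K H hFrob hh hh1 hk]
      -- now use the hypothesis in H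
      have hxH : (⟨h, hh⟩ : H) ∉ N.subgroupOf H := by
        simpa [Subgroup.mem_subgroupOf] using hhN
      have hnH : (⟨m, hm⟩ : H) ∈ N.subgroupOf H := by
        simpa [Subgroup.mem_subgroupOf] using hmN
      have := hord _ hxH _ hnH
      have h1 : orderOf ((⟨h, hh⟩ : H) * ⟨m, hm⟩) = orderOf (h * m) := by
        rw [← Subgroup.orderOf_coe]; rfl
      have h2 : orderOf (⟨h, hh⟩ : H) = orderOf h := by
        rw [← Subgroup.orderOf_coe]
      rw [h1, h2] at this
      exact this
  · rintro ⟨-, -, -, hord⟩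
    refine ⟨inferInstance, ?_, ?_, ?_⟩
    · -- nontrivial: N > K gives an element of H ∩ N other than 1
      obtain ⟨y, hyN, hyK⟩ := SetLike.exists_of_lt hKN
      obtain ⟨k, hk, h, hh, rfl⟩ := decomp y
      have hhN : h ∈ N := by
        have : k⁻¹ * (k * h) ∈ N := N.mul_mem (N.inv_mem (hKle hk)) hyN
        simpa using this
      have hh1 : h ≠ 1 := by
        rintro rfl
        exact hyK (by simpa using hk)
      intro hbot
      have := (Subgroup.eq_bot_iff_forall _).mp hbot ⟨h, hh⟩
        (by simpa [Subgroup.mem_subgroupOf] using hhN)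
      exact hh1 (by simpa using congrArg Subtype.val this)
    · intro htop
      rw [Subgroup.subgroupOf_eq_top] at htop
      exact hNG.ne (top_le_iff.mp (hG ▸ sup_le hKle htop))
    · intro x hx n hn
      have hx' : (x : G) ∉ N := by simpa [Subgroup.mem_subgroupOf] using hx
      have hn' : (n : G) ∈ N := hn
      have := hord _ hx' _ hn'
      rw [← Subgroup.orderOf_coe x, ← Subgroup.orderOf_coe (x * n)]
      exact this
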